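/- Let n be a natural number with n ≥ 1, let d be a natural number with d ≥ 1, let σ_s > 0 be a real number, let ν ∈ [0,1], and set σ_r = ν·σ_s. Define β_s = exp(−((2·√n − 1)^2 · d) / (2·(2·√n + 4·σ_s)^2 · σ_s^2)). Then for every real ε with ε ≤ (2·√n − 1)·(1 − ν) / (2·√n + 4·σ_s), it holds that ε ≤ (2·√n − 1)/(2·√n + 4·σ_r) − σ_r·√(2·log(1/β_s))/√d. -/

import Mathlib

open Real

theorem stmt_0 (n d : ℕ) (hn : 1 ≤ n) (hd : 1 ≤ d)
    (σs : ℝ) (hσs : 0 < σs) (ν : ℝ) (hν : ν ∈ Set.Icc (0 : ℝ) 1)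
    (σr : ℝ) (hσr : σr = ν * σs)
    (βs : ℝ)
    (hβs : βs = Real.exp (-((2 * Real.sqrt n - 1) ^ 2 * d) /
      (2 * (2 * Real.sqrt n + 4 * σs) ^ 2 * σs ^ 2)))
    (ε : ℝ)
    (hε : ε ≤ (2 * Real.sqrt n - 1) * (1 - ν) / (2 * Real.sqrt n + 4 * σs)) :
    ε ≤ (2 * Real.sqrt n - 1) / (2 * Real.sqrt n + 4 * σr) -
      σr * Real.sqrt (2 * Real.log (1 / βs)) / Real.sqrt d := by
  obtain ⟨hν0, hν1⟩ := hν
  have hn1 : (1:ℝ) ≤ Real.sqrt n := by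
    rw [show (1:ℝ) = Real.sqrt 1 by simp]
    exact Real.sqrt_le_sqrt (by exact_mod_cast hn)
  set s := Real.sqrt n with hs
  have hA : (1:ℝ) ≤ 2*s - 1 := by linarith
  have hB : (0:ℝ) < 2*s + 4*σs := by linarith
  have hd1 : (1:ℝ) ≤ (d:ℝ) := by exact_mod_cast hd
  have hd0 : (0:ℝ) < Real.sqrt d := Real.sqrt_pos.2 (by linarith)
  have hdsq : (Real.sqrt d)^2 = (d:ℝ) := Real.sq_sqrt (by linarith)
  have hlog : Real.log (1/βs) = ((2*s-1)^2 * d) / (2*(2*s+4*σs)^2 * σs^2) := by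
    rw [hβs, one_div, ← Real.exp_neg, Real.log_exp]; ring
  have hsq : Real.sqrt (2 * Real.log (1/βs)) =
      (2*s-1)*Real.sqrt d/((2*s+4*σs)*σs) := by
    rw [hlog, show 2 * (((2*s-1)^2 * d) / (2*(2*s+4*σs)^2 * σs^2)) =
        ((2*s-1)*Real.sqrt d/((2*s+4*σs)*σs))^2 from ?_,
      Real.sqrt_sq (by positivity)]
    field_simp
    rw [hdsq]
  rw [hsq, hσr]
  have key : ν*σs * ((2*s-1)*Real.sqrt d/((2*s+4*σs)*σs)) / Real.sqrt d
      = ν*(2*s-1)/(2*s+4*σs) := by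
    field_simp
  rw [key]
  have hB' : (0:ℝ) < 2*s + 4*(ν*σs) := by nlinarith
  have hle : 2*s + 4*(ν*σs) ≤ 2*s + 4*σs := by nlinarith
  have h1 : (2*s-1)/(2*s+4*σs) ≤ (2*s-1)/(2*s+4*(ν*σs)) :=
    div_le_div_of_nonneg_left (by linarith) hB' hle
  have hsplit : (2*s-1)*(1-ν)/(2*s+4*σs) =
      (2*s-1)/(2*s+4*σs) - ν*(2*s-1)/(2*s+4*σs) := by ring
  linarith [hε, hsplit ▸ hε]
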